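/- arXiv:2407.16422 — 3 statements merged into one kernel-verified Lean document; each statement's English description precedes it below -/
import Mathlib

section
/- For the problem min (x₁+2)² + (x₂−1)² s.t. x₂³ − 3x₂ − g̃₁(x₁) ≤ 0 (with g̃₁ as in the paper's Example), quasinormality fails at x̄ = (−2,1): the multiplier v₁ = 1 > 0 satisfies 0 ∈ v₁·∂g₁(x̄) (since ∂g₁(−2,1) = [−9,0] × {0} contains 0), and for the sequence x^k = (−2 + 1/k, 1 + 1/k), one has v₁·g₁(x^k) = 1/k³ + 3/k² > 0 for all k ≥ 1, while x^k → x̄. -/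
open Filter

/-- Quasinormality fails at x̄ = (-2,1): with multiplier v₁ = 1 > 0, 0 belongs to
v₁·∂g₁(x̄) = [-9,0] × {0}, and the sequence x^k = (-2+1/k, 1+1/k) converges to x̄
with v₁·g₁(x^k) = 1/k³ + 3/k² > 0 for all k ≥ 1. -/
theorem quasinormality_fails_example :
    let gtil : ℝ → ℝ := fun x₁ => if x₁ ∈ Set.Icc (-2 : ℝ) 1 then -2 else x₁ ^ 3 - 3 * x₁
    let g₁ : ℝ → ℝ → ℝ := fun x₁ x₂ => x₂ ^ 3 - 3 * x₂ - gtil x₁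
    ((0, 0) : ℝ × ℝ) ∈ (fun s : ℝ × ℝ => (1 : ℝ) • s) '' (Set.Icc (-9 : ℝ) 0 ×ˢ ({0} : Set ℝ)) ∧
    (∀ k : ℕ, 1 ≤ k →
      (1 : ℝ) * g₁ (-2 + 1 / k) (1 + 1 / k) = 1 / (k : ℝ) ^ 3 + 3 / (k : ℝ) ^ 2 ∧
      0 < (1 : ℝ) * g₁ (-2 + 1 / k) (1 + 1 / k)) ∧
    Tendsto (fun k : ℕ => ((-2 + 1 / k, 1 + 1 / k) : ℝ × ℝ)) atTop (nhds (-2, 1)) := by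
  intro gtil g₁
  refine ⟨⟨(0, 0), ⟨⟨by norm_num, by norm_num⟩, rfl⟩, by simp⟩, ?_, ?_⟩
  · intro k hk
    have hk0 : (0 : ℝ) < k := by exact_mod_cast hk
    have hmem : (-2 + 1 / (k : ℝ)) ∈ Set.Icc (-2 : ℝ) 1 := by
      constructor
      · nlinarith [one_div_pos.mpr hk0]
      · have h1 : 1 / (k : ℝ) ≤ 1 := by
          rw [div_le_one hk0]; exact_mod_cast hk
        linarith
    have heq : (1 : ℝ) * g₁ (-2 + 1 / k) (1 + 1 / k)
        = 1 / (k : ℝ) ^ 3 + 3 / (k : ℝ) ^ 2 := by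
      simp only [g₁, gtil, if_pos hmem]
      field_simp
      ring
    refine ⟨heq, ?_⟩
    rw [heq]
    have := pow_pos hk0 3
    have := pow_pos hk0 2
    positivity
  · have h : Tendsto (fun k : ℕ => (1 / (k : ℝ))) atTop (nhds 0) :=
      tendsto_one_div_atTop_nhds_zero_nat
    have h1 : Tendsto (fun k : ℕ => (-2 + 1 / (k : ℝ))) atTop (nhds (-2)) := by
      simpa using (tendsto_const_nhds.add h)
    have h2 : Tendsto (fun k : ℕ => (1 + 1 / (k : ℝ))) atTop (nhds 1) := by
      simpa using (tendsto_const_nhds.add h)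
    exact h1.prodMk_nhds h2
end

section
/- For the problem min (x₁+x₂)x₁ s.t. g₁ = x₁x₂ ≤ 0, g₂ = −x₁x₂ ≤ 0, g₃ = −x₁ ≤ 0, the cone-continuity property fails at x̄ = (0,1). Specifically: K(x̄) = {Σ_{j∈{1,2,3}} v_j ∇g_j(x̄) | v_j ≥ 0} = ℝ × {0}, and for x^k = (1/k, 1), the combination 2k∇g₁(x^k) + k∇g₂(x^k) + k∇g₃(x^k) = (0,1) for every k ≥ 1, so (0,1) lies in limsup_{x→x̄} K(x) but (0,1) ∉ K(x̄). -/
/-- CCP fails at x̄ = (0,1): K(x̄) = ℝ × {0}, the combination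
2k∇g₁(x^k) + k∇g₂(x^k) + k∇g₃(x^k) at x^k = (1/k,1) equals (0,1) for all k ≥ 1,
and (0,1) ∉ K(x̄). -/
theorem ccp_fails_example :
    {z : ℝ × ℝ | ∃ v₁ v₂ v₃ : ℝ, 0 ≤ v₁ ∧ 0 ≤ v₂ ∧ 0 ≤ v₃ ∧
        z = v₁ • ((1, 0) : ℝ × ℝ) + v₂ • ((-1, 0) : ℝ × ℝ) + v₃ • ((-1, 0) : ℝ × ℝ)}
      = Set.univ ×ˢ ({0} : Set ℝ) ∧
    (∀ k : ℕ, 1 ≤ k →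
      (2 * k : ℝ) • ((1, 1 / k) : ℝ × ℝ) + (k : ℝ) • ((-1, -(1 / k)) : ℝ × ℝ)
        + (k : ℝ) • ((-1, 0) : ℝ × ℝ) = (0, 1)) ∧
    ((0, 1) : ℝ × ℝ) ∉ Set.univ ×ˢ ({0} : Set ℝ) := by
  refine ⟨?_, ?_, ?_⟩
  · ext ⟨a, b⟩
    simp only [Set.mem_setOf_eq, Set.mem_prod, Set.mem_univ, Set.mem_singleton_iff, true_and,
      Prod.smul_mk, smul_eq_mul, Prod.mk_add_mk, Prod.mk.injEq]
    constructor
    · rintro ⟨v₁, v₂, v₃, h₁, h₂, h₃, ha, hb⟩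
      simp [hb]
    · rintro hb
      rcases le_total 0 a with h | h
      · exact ⟨a, 0, 0, h, le_refl 0, le_refl 0, by ring, by simp [hb]⟩
      · exact ⟨0, -a, 0, le_refl 0, by linarith, le_refl 0, by ring, by simp [hb]⟩
  · intro k hk
    have hk0 : (k : ℝ) ≠ 0 := by positivity
    simp only [Prod.smul_mk, smul_eq_mul, Prod.mk_add_mk, Prod.mk.injEq]
    constructor
    · ring
    · field_simp
      ring
  · simp
end

section
/- The sequence (x^k, y^k, v^k, w^k, δ̂^k, γ_k, ε^k) = (0, (0, −1/k), (0,0), 0, (0,0), 1/k, (0,0,0)) satisfies the perturbed KKT (AKKT) system of the lower-level value function reformulation of the bilevel problem with F(x,y) = x y₁, f̂(x,y) = −x²y₂, ĝ₁ = y₂, ĝ₂ = −x y₁ + y₂, φ ≡ 0, at the point (x̄, ȳ) = (0,(0,0)): for every k, ε^k = ∇F + v₁^k∇ĝ₁ + v₂^k∇ĝ₂ + w^k∇(f̂ − φ) evaluated at (x^k,y^k), with v^k ≥ 0, ĝ(x^k,y^k) ≤ δ̂^k, complementarity, w^k ≥ 0, f̂(x^k,y^k) − φ(x^k) ≤ γ_k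 with complementarity, and (x^k, y^k, δ̂^k, γ_k, ε^k) → (0, (0,0), 0, 0, 0). Moreover all perturbed active index sets are empty: y₂^k = −1/k < 0 = δ̂₁^k, −x^k y₁^k + y₂^k = −1/k < 0 = δ̂₂^k, and −(x^k)²y₂^k = 0 < 1/k = γ_k. -/
open Filter

/-- The sequence (x^k,y^k,v^k,w^k,δ̂^k,γ_k,ε^k) = (0,(0,-1/k),(0,0),0,(0,0),1/k,0)
satisfies the perturbed KKT (AKKT) system of the LLVFR of the bilevel example at
(x̄,ȳ) = (0,(0,0)), with all perturbed active index sets empty. -/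
theorem llvfr_akkt_sequence_example :
    let x : ℕ → ℝ := fun _ => 0
    let y : ℕ → ℝ × ℝ := fun k => (0, -(1 / k))
    let v : ℕ → ℝ × ℝ := fun _ => (0, 0)
    let w : ℕ → ℝ := fun _ => 0
    let δ : ℕ → ℝ × ℝ := fun _ => (0, 0)
    let γ : ℕ → ℝ := fun k => 1 / k
    let ε : ℕ → ℝ × ℝ × ℝ := fun _ => (0, 0, 0)
    (∀ k : ℕ, 1 ≤ k →
      -- stationarity: ε^k = ∇F + v₁^k ∇ĝ₁ + v₂^k ∇ĝ₂ + w^k ∇(f̂ - φ) at (x^k, y^k)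
      ε k = (((y k).1, x k, 0) : ℝ × ℝ × ℝ)
          + (v k).1 • ((0, 0, 1) : ℝ × ℝ × ℝ)
          + (v k).2 • ((-(y k).1, -(x k), 1) : ℝ × ℝ × ℝ)
          + w k • ((-2 * x k * (y k).2, 0, -(x k) ^ 2) : ℝ × ℝ × ℝ) ∧
      0 ≤ (v k).1 ∧ 0 ≤ (v k).2 ∧ 0 ≤ w k ∧
      (y k).2 ≤ (δ k).1 ∧
      -(x k) * (y k).1 + (y k).2 ≤ (δ k).2 ∧
      -(x k) ^ 2 * (y k).2 - 0 ≤ γ k ∧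
      (v k).1 * ((y k).2 - (δ k).1) = 0 ∧
      (v k).2 * (-(x k) * (y k).1 + (y k).2 - (δ k).2) = 0 ∧
      w k * (-(x k) ^ 2 * (y k).2 - 0 - γ k) = 0 ∧
      -- all perturbed active index sets are empty
      (y k).2 < (δ k).1 ∧
      -(x k) * (y k).1 + (y k).2 < (δ k).2 ∧
      -(x k) ^ 2 * (y k).2 - 0 < γ k) ∧
    Tendsto x atTop (nhds 0) ∧
    Tendsto y atTop (nhds (0, 0)) ∧
    Tendsto δ atTop (nhds (0, 0)) ∧
    Tendsto γ atTop (nhds 0) ∧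
    Tendsto ε atTop (nhds (0, 0, 0)) := by
  intro x y v w δ γ ε
  have hlim : Tendsto (fun k : ℕ => (1 : ℝ) / k) atTop (nhds 0) :=
    tendsto_one_div_atTop_nhds_zero_nat
  refine ⟨fun k hk => ?_, tendsto_const_nhds, ?_, tendsto_const_nhds, hlim,
    tendsto_const_nhds⟩
  · have hkpos : (0 : ℝ) < 1 / k := by
      have : (0 : ℝ) < (k : ℝ) := by exact_mod_cast hk
      positivity
    refine ⟨by simp [x, y, v, w, ε, Prod.ext_iff], le_refl _, le_refl _, le_refl _,
      ?_, ?_, ?_, by simp [v], by simp [v], by simp [w], ?_, ?_, ?_⟩ <;>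
      simp [x, y, δ, γ] <;> linarith
  · have : Tendsto (fun k : ℕ => (-(1 / k) : ℝ)) atTop (nhds 0) := by
      simpa using hlim.neg
    rw [nhds_prod_eq]; exact Tendsto.prodMk (tendsto_const_nhds : Tendsto (fun _ : ℕ => (0 : ℝ)) atTop (nhds 0)) this
end
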